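/- Let L be an irreducible almost lower triangular transition matrix on ℕ, let 0 < x < b be integers, and let μ be the law of the L-Markov chain started at x. Then the probability that the chain hits b strictly before hitting 0, namely μ{ω : ∃ n ≥ 1, ω n = b and 1 ≤ ω m ≤ b−1 for all 1 ≤ m < n}, equals (det(Id − L_{[1,x−1]}) / det(Id − L_{[1,b−1]})) · ∏_{j=x}^{b−1} L j (j+1), with the convention det(Id − L_{[a,c]}) = 1 when a > c. -/

import Mathlib

/-- `detOneSubI M a b = det(Id − M_{[a,b]})`, equal to `1` when `a > b`. -/
noncomputable def detOneSubI (M : ℕ → ℕ → ℝ) (a b : ℕ) : ℝ :=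
  Matrix.det (1 - Matrix.of fun i j : Fin (b + 1 - a) => M (a + i.1) (a + j.1))

/-- Irreducibility of a matrix on `ℕ`. -/
def MatIrreducible (M : ℕ → ℕ → ℝ) : Prop :=
  ∀ i j : ℕ, ∃ (n : ℕ) (x : ℕ → ℕ), 0 < n ∧ x 0 = i ∧ x n = j ∧
    ∀ k, k < n → 0 < M (x k) (x (k + 1))

/-- `μ` is the law of the `M`-Markov chain started at `s`. -/
def IsMarkovLaw (M : ℕ → ℕ → ℝ) (s : ℕ) (μ : MeasureTheory.Measure (ℕ → ℕ)) : Prop :=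
  MeasureTheory.IsProbabilityMeasure μ ∧
    ∀ (n : ℕ) (x : ℕ → ℕ),
      μ {ω | ∀ k ≤ n, ω k = x k} =
        ENNReal.ofReal
          ((if x 0 = s then (1 : ℝ) else 0) * ∏ k ∈ Finset.range n, M (x k) (x (k + 1)))

open Matrix Finset MeasureTheory

namespace HitAux2

variable {m : ℕ} (Q : Matrix (Fin m) (Fin m) ℝ)

noncomputable def rsum (n : ℕ) (i : Fin m) : ℝ := ∑ j, (Q ^ n) i j

lemma pow_entry_nonneg (hQ : ∀ i j, 0 ≤ Q i j) (n : ℕ) : ∀ i j, 0 ≤ (Q ^ n) i j := by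
  induction n with
  | zero => intro i j; rw [pow_zero]; rw [Matrix.one_apply]; positivity
  | succ n IH =>
    intro i j
    rw [pow_succ, Matrix.mul_apply]
    exact Finset.sum_nonneg fun k _ => mul_nonneg (IH i k) (hQ k j)

lemma rsum_zero (i : Fin m) : rsum Q 0 i = 1 := by
  simp [rsum, Matrix.one_apply]

lemma rsum_succ (n : ℕ) (i : Fin m) : rsum Q (n + 1) i = ∑ k, Q i k * rsum Q n k := by
  simp only [rsum, pow_succ', Matrix.mul_apply]
  rw [Finset.sum_comm]
  simp [Finset.mul_sum]

lemma rsum_nonneg (hQ : ∀ i j, 0 ≤ Q i j) (n : ℕ) (i : Fin m) : 0 ≤ rsum Q n i :=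
  Finset.sum_nonneg fun j _ => pow_entry_nonneg Q hQ n i j

lemma rsum_le_one (hQ : ∀ i j, 0 ≤ Q i j) (hrow : ∀ i, ∑ j, Q i j ≤ 1) (n : ℕ) (i : Fin m) :
    rsum Q n i ≤ 1 := by
  induction n generalizing i with
  | zero => rw [rsum_zero]
  | succ n IH =>
    rw [rsum_succ]
    calc ∑ k, Q i k * rsum Q n k ≤ ∑ k, Q i k * 1 :=
          Finset.sum_le_sum fun k _ => mul_le_mul_of_nonneg_left (IH k) (hQ i k)
      _ ≤ 1 := by simpa using hrow i

lemma rsum_succ_le (hQ : ∀ i j, 0 ≤ Q i j) (hrow : ∀ i, ∑ j, Q i j ≤ 1) (n : ℕ) (i : Fin m) :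
    rsum Q (n + 1) i ≤ rsum Q n i := by
  induction n generalizing i with
  | zero =>
    rw [rsum_succ, rsum_zero]
    calc ∑ k, Q i k * rsum Q 0 k = ∑ k, Q i k := by simp [rsum_zero]
      _ ≤ 1 := hrow i
  | succ n IH =>
    rw [rsum_succ, rsum_succ]
    exact Finset.sum_le_sum fun k _ => mul_le_mul_of_nonneg_left (IH k) (hQ i k)

lemma rsum_anti (hQ : ∀ i j, 0 ≤ Q i j) (hrow : ∀ i, ∑ j, Q i j ≤ 1) :
    ∀ (a b : ℕ), a ≤ b → ∀ i, rsum Q b i ≤ rsum Q a i := by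
  intro a b hab i
  induction b with
  | zero => have : a = 0 := by omega
            subst this; exact le_refl _
  | succ b IH =>
    rcases Nat.lt_succ_iff_lt_or_eq.mp (Nat.lt_succ_of_le hab) with h | h
    · exact le_trans (rsum_succ_le Q hQ hrow b i) (IH (by omega))
    · subst h; exact le_refl _

lemma rsum_add (a b : ℕ) (i : Fin m) : rsum Q (a + b) i = ∑ k, (Q ^ a) i k * rsum Q b k := by
  simp only [rsum, pow_add, Matrix.mul_apply]
  rw [Finset.sum_comm]
  simp [Finset.mul_sum]

lemma rsum_le_geom (hQ : ∀ i j, 0 ≤ Q i j) (hrow : ∀ i, ∑ j, Q i j ≤ 1)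
    {N : ℕ} {c : ℝ} (hN : 0 < N) (hc0 : 0 ≤ c) (hc : ∀ i, rsum Q N i ≤ c) :
    ∀ s i, rsum Q s i ≤ c ^ (s / N) := by
  intro s
  induction s using Nat.strong_induction_on with
  | _ s IH =>
    intro i
    rcases lt_or_ge s N with h | h
    · rw [Nat.div_eq_of_lt h, pow_zero]
      exact rsum_le_one Q hQ hrow s i
    · obtain ⟨t, rfl⟩ : ∃ t, s = N + t := ⟨s - N, by omega⟩
      rw [show (N + t) / N = t / N + 1 by rw [Nat.add_comm N t, Nat.add_div_right t hN], rsum_add]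
      calc ∑ k, (Q ^ N) i k * rsum Q t k
          ≤ ∑ k, (Q ^ N) i k * c ^ (t / N) :=
            Finset.sum_le_sum fun k _ => mul_le_mul_of_nonneg_left
              (IH t (by omega) k) (pow_entry_nonneg Q hQ N i k)
        _ = rsum Q N i * c ^ (t / N) := by rw [← Finset.sum_mul]; rfl
        _ ≤ c * c ^ (t / N) := by
            exact mul_le_mul_of_nonneg_right (hc i) (by positivity)
        _ = c ^ (t / N + 1) := by rw [pow_succ]; ring

lemma summable_geom_div {N : ℕ} {c : ℝ} (hN : 0 < N) (hc0 : 0 ≤ c) (hc1 : c < 1) :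
    Summable (fun s : ℕ => c ^ (s / N)) := by
  haveI : NeZero N := ⟨by omega⟩
  have he : Summable ((fun p : ℕ × Fin N => c ^ p.1) ∘ (Nat.divModEquiv N)) ↔
      Summable (fun p : ℕ × Fin N => c ^ p.1) := (Nat.divModEquiv N).summable_iff
  have hs : Summable (fun p : ℕ × Fin N => c ^ p.1) := by
    rw [summable_prod_of_nonneg (fun p => by positivity)]
    refine ⟨fun k => Summable.of_finite, ?_⟩
    simp only [tsum_fintype]
    apply Summable.congr ((summable_geometric_of_lt_one hc0 hc1).mul_left (N : ℝ))
    intro k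
    simp [Finset.sum_const, nsmul_eq_mul]
  have : (fun s : ℕ => c ^ (s / N)) = (fun p : ℕ × Fin N => c ^ p.1) ∘ (Nat.divModEquiv N) := by
    funext s
    rfl
  rw [this]
  exact he.mpr hs

lemma entry_le_rsum (hQ : ∀ i j, 0 ≤ Q i j) (n : ℕ) (i j : Fin m) :
    (Q ^ n) i j ≤ rsum Q n i :=
  Finset.single_le_sum (fun k _ => pow_entry_nonneg Q hQ n i k) (Finset.mem_univ j)

lemma summable_pow_entry (hQ : ∀ i j, 0 ≤ Q i j) (hrow : ∀ i, ∑ j, Q i j ≤ 1)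
    {N : ℕ} {c : ℝ} (hN : 0 < N) (hc0 : 0 ≤ c) (hc1 : c < 1) (hc : ∀ i, rsum Q N i ≤ c)
    (i j : Fin m) : Summable (fun n => (Q ^ n) i j) := by
  apply Summable.of_nonneg_of_le (fun n => pow_entry_nonneg Q hQ n i j)
    (fun n => le_trans (entry_le_rsum Q hQ n i j) (rsum_le_geom Q hQ hrow hN hc0 hc n i))
  exact summable_geom_div hN hc0 hc1

noncomputable def Smat (Q : Matrix (Fin m) (Fin m) ℝ) : Matrix (Fin m) (Fin m) ℝ :=
  Matrix.of fun i j => ∑' n, (Q ^ n) i j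

lemma mul_Smat (hsum : ∀ i j, Summable (fun n => (Q ^ n) i j)) :
    Q * Smat Q = Smat Q - 1 := by
  ext i j
  rw [Matrix.mul_apply]
  have h1 : ∀ k : Fin m, Q i k * (∑' n, (Q ^ n) k j) = ∑' n, Q i k * (Q ^ n) k j := by
    intro k
    exact (tsum_mul_left).symm
  calc ∑ k, Q i k * Smat Q k j = ∑ k, ∑' n, Q i k * (Q ^ n) k j := by
        apply Finset.sum_congr rfl
        intro k _
        exact h1 k
    _ = ∑' n, ∑ k, Q i k * (Q ^ n) k j := by
        rw [Summable.tsum_finsetSum]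
        intro k _
        exact (hsum k j).mul_left _
    _ = ∑' n, (Q ^ (n + 1)) i j := by
        apply tsum_congr
        intro n
        rw [pow_succ', Matrix.mul_apply]
    _ = Smat Q i j - (1 : Matrix (Fin m) (Fin m) ℝ) i j := by
        have h2 := Summable.tsum_eq_zero_add (hsum i j)
        have h3 : (Q ^ 0) i j = (1 : Matrix (Fin m) (Fin m) ℝ) i j := by rw [pow_zero]
        simp only [Smat, Matrix.of_apply]
        rw [h2, h3]
        ring
    _ = (Smat Q - 1) i j := by rw [Matrix.sub_apply]

lemma one_sub_mul_Smat (hsum : ∀ i j, Summable (fun n => (Q ^ n) i j)) :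
    (1 - Q) * Smat Q = 1 := by
  rw [sub_mul, one_mul, mul_Smat Q hsum]
  exact sub_sub_cancel _ _

lemma pathSum (n : ℕ) (a c : Fin m) :
    ∑ q : (Fin (n + 1) → Fin m),
        (if q 0 = a ∧ q (Fin.last n) = c then ∏ k : Fin n, Q (q k.castSucc) (q k.succ) else 0)
      = (Q ^ n) a c := by
  induction n generalizing a c with
  | zero =>
    rw [pow_zero, Matrix.one_apply]
    have hlast : (Fin.last 0) = (0 : Fin 1) := rfl
    have step1 : ∀ q : Fin 1 → Fin m,
        (if q 0 = a ∧ q (Fin.last 0) = c then ∏ k : Fin 0, Q (q k.castSucc) (q k.succ) else 0)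
          = if q 0 = a ∧ q 0 = c then 1 else 0 := by
      intro q
      rw [hlast]
      simp
    rw [Finset.sum_congr rfl fun q _ => step1 q]
    have e : ∀ q : Fin 1 → Fin m,
        (if q 0 = a ∧ q 0 = c then (1:ℝ) else 0)
          = (fun t : Fin m => if t = a ∧ t = c then (1:ℝ) else 0) ((Equiv.funUnique (Fin 1) (Fin m)) q) := by
      intro q
      rfl
    rw [Finset.sum_congr rfl fun q _ => e q]
    rw [Equiv.sum_comp (Equiv.funUnique (Fin 1) (Fin m))
      (fun t : Fin m => if t = a ∧ t = c then (1:ℝ) else 0)]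
    rcases eq_or_ne a c with h | h
    · subst h
      rw [if_pos rfl]
      have h2 : ∀ t : Fin m, (if t = a ∧ t = a then (1:ℝ) else 0) = if t = a then (1:ℝ) else 0 := by
        intro t; simp
      rw [Finset.sum_congr rfl fun t _ => h2 t]
      simp
    · rw [if_neg h, Finset.sum_eq_zero]
      intro t _
      rw [if_neg]
      rintro ⟨h1, h2⟩
      exact h (h1 ▸ h2 ▸ rfl)
  | succ n IH =>
    rw [← Equiv.sum_comp (Fin.consEquiv (fun _ : Fin (n + 2) => Fin m))]
    rw [Fintype.sum_prod_type]
    have key : ∀ (h : Fin m) (r : Fin (n + 1) → Fin m),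
        (fun q : Fin (n + 2) → Fin m =>
          if q 0 = a ∧ q (Fin.last (n + 1)) = c then
            ∏ k : Fin (n + 1), Q (q k.castSucc) (q k.succ) else 0) (Fin.consEquiv _ (h, r))
        = if h = a then (if r (Fin.last n) = c then Q h (r 0) *
            ∏ k : Fin n, Q (r k.castSucc) (r k.succ) else 0) else 0 := by
      intro h r
      have e1 : (Fin.consEquiv (fun _ : Fin (n + 2) => Fin m)) (h, r) = Fin.cons h r := rfl
      rw [e1]
      dsimp only
      have e2 : (Fin.cons h r : Fin (n+2) → Fin m) 0 = h := Fin.cons_zero _ _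
      have e3 : (Fin.cons h r : Fin (n+2) → Fin m) (Fin.last (n + 1)) = r (Fin.last n) := by
        rw [← Fin.succ_last, Fin.cons_succ]
      have e4 : ∏ k : Fin (n + 1), Q ((Fin.cons h r : Fin (n+2) → Fin m) k.castSucc)
            ((Fin.cons h r : Fin (n+2) → Fin m) k.succ)
          = Q h (r 0) * ∏ k : Fin n, Q (r k.castSucc) (r k.succ) := by
        rw [Fin.prod_univ_succ]
        have ha : (Fin.cons h r : Fin (n+2) → Fin m) ((0 : Fin (n+1)).castSucc) = h := by
          rw [Fin.castSucc_zero, Fin.cons_zero]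
        have hb : (Fin.cons h r : Fin (n+2) → Fin m) ((0 : Fin (n+1)).succ) = r 0 := by
          rw [Fin.cons_succ]
        rw [ha, hb]
        all_goals
          refine congrArg (fun z => Q h (r 0) * z) ?_
          refine Finset.prod_congr rfl (fun k _ => ?_)
          rw [← Fin.succ_castSucc, Fin.cons_succ, Fin.cons_succ]
      rw [e2, e3, e4, ite_and]
    rw [Finset.sum_congr rfl (fun h _ => Finset.sum_congr rfl (fun r _ => key h r))]
    rw [Finset.sum_comm]
    rw [Finset.sum_congr rfl (fun r (_ : r ∈ Finset.univ) => Finset.sum_ite_eq' Finset.univ a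
      (fun h => (if r (Fin.last n) = c then Q h (r 0) *
        ∏ k : Fin n, Q (r k.castSucc) (r k.succ) else 0)))]
    simp only [Finset.mem_univ, if_true]
    rw [pow_succ', Matrix.mul_apply]
    have rhs : ∀ t, Q a t * (Q ^ n) t c = ∑ r : Fin (n + 1) → Fin m,
        (if r 0 = t ∧ r (Fin.last n) = c then Q a t * ∏ k : Fin n, Q (r k.castSucc) (r k.succ)
          else 0) := by
      intro t
      rw [← IH t c, Finset.mul_sum]
      apply Finset.sum_congr rfl
      intro r _
      rw [mul_ite, mul_zero]
    rw [Finset.sum_congr rfl (fun t _ => rhs t), Finset.sum_comm]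
    apply Finset.sum_congr rfl
    intro r _
    rcases eq_or_ne (r (Fin.last n)) c with hc | hc
    · rw [if_pos hc]
      have h5 : ∀ t : Fin m,
          (if r 0 = t ∧ r (Fin.last n) = c then Q a t * ∏ k : Fin n, Q (r k.castSucc) (r k.succ) else 0)
          = (if t = r 0 then Q a t * ∏ k : Fin n, Q (r k.castSucc) (r k.succ) else 0) := by
        intro t
        rcases eq_or_ne (r 0) t with h | h
        · rw [if_pos ⟨h, hc⟩, if_pos h.symm]
        · rw [if_neg (by tauto), if_neg (Ne.symm h)]
      rw [Finset.sum_congr rfl (fun t _ => h5 t)]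
      rw [Finset.sum_ite_eq' Finset.univ (r 0)]
      simp
    · rw [if_neg hc, Finset.sum_eq_zero]
      intro t _
      rw [if_neg]
      tauto

end HitAux2

namespace HitAux
open HitAux2

variable (L : ℕ → ℕ → ℝ)

/-- entry function -/
noncomputable def ent (u v : ℕ) : ℝ := (if u = v then 1 else 0) - L (1 + u) (1 + v)

noncomputable def hitMat (n : ℕ) : Matrix (Fin n) (Fin n) ℝ :=
  1 - Matrix.of fun i j : Fin n => L (1 + i) (1 + j)

noncomputable def DmL (n : ℕ) : ℝ := (hitMat L n).det

lemma hitMat_apply {n : ℕ} (i j : Fin n) : hitMat L n i j = ent L i j := by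
  simp only [hitMat, ent, Matrix.sub_apply, Matrix.one_apply, Matrix.of_apply]
  congr 1
  simp [Fin.ext_iff]

lemma DmL_zero : DmL L 0 = 1 := Matrix.det_fin_zero

lemma val_succAbove {N : ℕ} (p : Fin (N + 1)) (i : Fin N) :
    ((p.succAbove i : Fin (N + 1)) : ℕ) = if (i : ℕ) < (p : ℕ) then (i : ℕ) else (i : ℕ) + 1 := by
  rcases lt_or_ge ((i : ℕ)) (p : ℕ) with h | h
  · rw [Fin.succAbove_of_castSucc_lt p i (by simpa [Fin.lt_def] using h)]
    simp [h]
  · rw [Fin.succAbove_of_le_castSucc p i (by simpa [Fin.le_def] using h)]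
    simp [Nat.not_lt.mpr h]

lemma hitMat_sub {N : ℕ} :
    (hitMat L (N + 1)).submatrix Fin.castSucc Fin.castSucc = hitMat L N := by
  ext i j
  simp only [Matrix.submatrix_apply, hitMat_apply, ent, Fin.coe_castSucc]

lemma minor_det (hlt : ∀ i j, i + 1 < j → L i j = 0) (n : ℕ) : ∀ (j : Fin (n + 1)),
    ((hitMat L (n + 1)).submatrix Fin.castSucc j.succAbove).det
      = DmL L j * ∏ k ∈ Finset.Ico (j : ℕ) n, (-(L (1 + k) (2 + k))) := by
  induction n with
  | zero =>
    intro j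
    have hj : j = 0 := by
      apply Fin.ext; omega
    subst hj
    simp [DmL_zero, Matrix.det_fin_zero]
  | succ n IH =>
    intro j
    rcases eq_or_ne j (Fin.last (n + 1)) with hj | hj
    · subst hj
      rw [Fin.succAbove_last, hitMat_sub]
      simp [DmL]
    · -- j ≠ last
      have hjn : (j : ℕ) ≤ n := by
        have h2 := j.isLt
        rcases Nat.lt_succ_iff_lt_or_eq.mp h2 with h | h
        · omega
        · exact absurd (Fin.ext h) hj
      set M := (hitMat L (n + 1 + 1)).submatrix Fin.castSucc j.succAbove with hM
      have hcol : ∀ i : Fin (n + 1), M i (Fin.last n) = -(L (1 + i) (n + 2)) := by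
        intro i
        have hval : ((j.succAbove (Fin.last n) : Fin (n+2)) : ℕ) = n + 1 := by
          rw [val_succAbove]
          simp only [Fin.val_last]
          rw [if_neg (by omega)]
        simp only [hM, Matrix.submatrix_apply, hitMat_apply, ent, hval, Fin.coe_castSucc]
        rw [if_neg (by have := i.isLt; omega)]
        ring_nf
      have hsub : M.submatrix (Fin.last n).succAbove (Fin.last n).succAbove
          = (hitMat L (n + 1)).submatrix Fin.castSucc (j.castPred hj).succAbove := by
        ext r c
        simp only [Matrix.submatrix_apply, Fin.succAbove_last, hM, hitMat_apply, ent,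
          Fin.coe_castSucc]
        have h1 : ((j.succAbove (Fin.castSucc c) : Fin (n+2)) : ℕ)
            = (((j.castPred hj).succAbove c : Fin (n+1)) : ℕ) := by
          rw [val_succAbove, val_succAbove]
          simp [Fin.coe_castPred]
          rfl
        rw [h1]
      rw [Matrix.det_succ_column M (Fin.last n)]
      rw [Finset.sum_eq_single (Fin.last n)]
      · rw [hcol, hsub, IH]
        have hsign : ((-1 : ℝ)) ^ ((Fin.last n : ℕ) + (Fin.last n : ℕ)) = 1 := by
          simp only [Fin.val_last]
          rw [← two_mul, pow_mul]
          norm_num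
        rw [hsign, one_mul]
        have hprod : ∏ k ∈ Ico (j : ℕ) (n + 1), (-(L (1 + k) (2 + k)))
            = (∏ k ∈ Ico (j : ℕ) n, (-(L (1 + k) (2 + k)))) * (-(L (1 + n) (2 + n))) := by
          rw [Finset.prod_Ico_succ_top hjn]
        rw [hprod, Fin.coe_castPred]
        simp only [Fin.val_last]
        rw [show (2 + n) = (n + 2) by omega] 
        ring
      · intro i _ hi
        have hiv : (i : ℕ) < n := by
          have h2 := i.isLt
          rcases Nat.lt_succ_iff_lt_or_eq.mp h2 with h | h
          · exact h
          · exact absurd (Fin.ext h) hi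
        rw [hcol]
        rw [hlt (1 + i) (n + 2) (by omega)]
        ring
      · intro h
        exact absurd (Finset.mem_univ _) h


lemma prod_neg_eq {s : Finset ℕ} {f : ℕ → ℝ} :
    ∏ k ∈ s, (-(f k)) = (-1) ^ s.card * ∏ k ∈ s, f k := by
  rw [← Finset.prod_const]
  rw [← Finset.prod_mul_distrib]
  simp

lemma DmL_succ (hlt : ∀ i j, i + 1 < j → L i j = 0) (n : ℕ) :
    DmL L (n + 1) = DmL L n
      - ∑ j : Fin (n + 1), L (1 + n) (1 + (j : ℕ)) *
          (DmL L j * ∏ k ∈ Finset.Ico (j : ℕ) n, L (1 + k) (2 + k)) := by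
  have key : ∀ j : Fin (n + 1),
      (-1 : ℝ) ^ ((Fin.last n : ℕ) + (j : ℕ)) * (hitMat L (n + 1) (Fin.last n) j) *
          ((hitMat L (n + 1)).submatrix (Fin.last n).succAbove j.succAbove).det
        = (if j = Fin.last n then DmL L n else 0)
          - L (1 + n) (1 + (j : ℕ)) *
              (DmL L j * ∏ k ∈ Finset.Ico (j : ℕ) n, L (1 + k) (2 + k)) := by
    intro j
    rw [Fin.succAbove_last, minor_det L hlt n j, hitMat_apply, prod_neg_eq, Nat.card_Ico]
    simp only [ent, Fin.val_last]
    have hsg : (-1 : ℝ) ^ (n + (j : ℕ)) * (-1 : ℝ) ^ (n - (j : ℕ)) = 1 := by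
      rw [← pow_add]
      have hj := j.isLt
      rw [show n + (j : ℕ) + (n - (j : ℕ)) = 2 * n by omega, pow_mul]
      norm_num
    rcases eq_or_ne j (Fin.last n) with hj | hj
    · subst hj
      simp only [Fin.val_last, if_true, Finset.Ico_self, Finset.prod_empty,
        Nat.sub_self, pow_zero, one_mul, mul_one]
      rw [show n + n = 2 * n by omega, pow_mul]
      norm_num
      ring
    · have hne : (n : ℕ) ≠ (j : ℕ) := by
        intro h
        exact hj (Fin.ext h.symm)
      rw [if_neg hne, if_neg hj]
      have : (-1 : ℝ) ^ (n + (j:ℕ)) * (0 - L (1 + n) (1 + (j:ℕ))) *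
            (DmL L j * ((-1:ℝ) ^ (n - (j:ℕ)) * ∏ k ∈ Finset.Ico (j:ℕ) n, L (1 + k) (2 + k)))
          = -(((-1 : ℝ) ^ (n + (j:ℕ)) * (-1:ℝ) ^ (n - (j:ℕ))) * (L (1 + n) (1 + (j:ℕ)) *
              (DmL L j * ∏ k ∈ Finset.Ico (j:ℕ) n, L (1 + k) (2 + k)))) := by ring
      rw [this, hsg]
      ring
  have hdet := Matrix.det_succ_row (hitMat L (n + 1)) (Fin.last n)
  rw [show DmL L (n + 1) = (hitMat L (n + 1)).det from rfl, hdet]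
  rw [Finset.sum_congr rfl (fun j _ => key j), Finset.sum_sub_distrib]
  congr 1
  simp

variable (L : ℕ → ℕ → ℝ)

lemma DmL_succ' (hlt : ∀ i j, i + 1 < j → L i j = 0) (n : ℕ) :
    DmL L (n + 1) = DmL L n
      - ∑ t ∈ Finset.range (n + 1), L (1 + n) (1 + t) *
          (DmL L t * ∏ k ∈ Finset.Ico t n, L (1 + k) (2 + k)) := by
  rw [DmL_succ L hlt n]
  congr 1
  exact Fin.sum_univ_eq_sum_range
    (fun t => L (1 + n) (1 + t) * (DmL L t * ∏ k ∈ Finset.Ico t n, L (1 + k) (2 + k))) (n + 1)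

lemma rowKey (hlt : ∀ i j, i + 1 < j → L i j = 0) {m : ℕ} (hm : 0 < m) (s : ℕ) (hs : s < m) :
    ∑ k ∈ Finset.range m, L (1 + s) (1 + k) *
        (DmL L k * ∏ j ∈ Finset.Ico k (m - 1), L (1 + j) (2 + j))
      = DmL L s * ∏ j ∈ Finset.Ico s (m - 1), L (1 + j) (2 + j)
        - (if s = m - 1 then DmL L m else 0) := by
  obtain ⟨n, rfl⟩ : ∃ n, m = n + 1 := ⟨m - 1, by omega⟩
  have hsub : n + 1 - 1 = n := by omega
  rw [hsub]
  rcases eq_or_ne s n with hsn | hsn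
  · subst hsn
    rw [if_pos rfl, DmL_succ' L hlt s]
    simp
  · have hslt : s < n := by omega
    rw [if_neg (by omega)]
    have hsplit := Finset.sum_range_add_sum_Ico
      (fun k => L (1 + s) (1 + k) * (DmL L k * ∏ j ∈ Finset.Ico k n, L (1 + j) (2 + j)))
      (show s + 2 ≤ n + 1 by omega)
    rw [← hsplit]
    have hzero : ∑ k ∈ Finset.Ico (s + 2) (n + 1),
        L (1 + s) (1 + k) * (DmL L k * ∏ j ∈ Finset.Ico k n, L (1 + j) (2 + j)) = 0 := by
      apply Finset.sum_eq_zero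
      intro k hk
      rw [Finset.mem_Ico] at hk
      rw [hlt (1 + s) (1 + k) (by omega)]
      ring
    rw [hzero, add_zero, Finset.sum_range_succ]
    set P := ∏ j ∈ Finset.Ico s n, L (1 + j) (2 + j) with hP
    have hPsplit : P = L (1 + s) (2 + s) * ∏ j ∈ Finset.Ico (s + 1) n, L (1 + j) (2 + j) :=
      Finset.prod_eq_prod_Ico_succ_bot hslt _
    have hterm : ∀ k ∈ Finset.range (s + 1),
        L (1 + s) (1 + k) * (DmL L k * ∏ j ∈ Finset.Ico k n, L (1 + j) (2 + j))
          = (L (1 + s) (1 + k) * (DmL L k * ∏ j ∈ Finset.Ico k s, L (1 + j) (2 + j))) * P := by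
      intro k hk
      rw [Finset.mem_range] at hk
      rw [hP, ← Finset.prod_Ico_consecutive (fun j => L (1 + j) (2 + j))
        (show k ≤ s by omega) (le_of_lt hslt)]
      ring
    rw [Finset.sum_congr rfl hterm, ← Finset.sum_mul]
    have hrec : ∑ k ∈ Finset.range (s + 1),
        L (1 + s) (1 + k) * (DmL L k * ∏ j ∈ Finset.Ico k s, L (1 + j) (2 + j))
          = DmL L s - DmL L (s + 1) := by
      have := DmL_succ' L hlt s
      linarith
    rw [hrec]
    have harg : 1 + (s + 1) = 2 + s := by omega
    rw [harg, hPsplit]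
    ring

open HitAux2

def Qmat (L : ℕ → ℕ → ℝ) (m : ℕ) : Matrix (Fin m) (Fin m) ℝ :=
  Matrix.of fun i j : Fin m => L (1 + (i : ℕ)) (1 + (j : ℕ))

variable (L : ℕ → ℕ → ℝ)

lemma sum_shift_add_le (hnn : ∀ i j, 0 ≤ L i j) (hrow : ∀ i, HasSum (fun j => L i j) 1)
    (s : ℕ) (m : ℕ) (u : ℕ) (hu : ∀ j, j < m → 1 + j ≠ u) :
    (∑ j ∈ Finset.range m, L s (1 + j)) + L s u ≤ 1 := by
  have himg : (∑ j ∈ Finset.range m, L s (1 + j))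
      = ∑ t ∈ (Finset.range m).image (fun j => 1 + j), L s t := by
    rw [Finset.sum_image (fun a _ b _ h => by omega)]
  have hnotmem : u ∉ (Finset.range m).image (fun j => 1 + j) := by
    simp only [Finset.mem_image, Finset.mem_range, not_exists]
    intro j hj
    exact hu j hj.1 hj.2
  have : (∑ j ∈ Finset.range m, L s (1 + j)) + L s u
      = ∑ t ∈ insert u ((Finset.range m).image (fun j => 1 + j)), L s t := by
    rw [Finset.sum_insert hnotmem, himg]
    ring
  rw [this]
  exact sum_le_hasSum _ (fun i _ => hnn s i) (hrow s)

lemma sum_shift_le (hnn : ∀ i j, 0 ≤ L i j) (hrow : ∀ i, HasSum (fun j => L i j) 1)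
    (s : ℕ) (m : ℕ) : (∑ j ∈ Finset.range m, L s (1 + j)) ≤ 1 := by
  have := sum_shift_add_le L hnn hrow s m (1 + m) (fun j hj => by omega)
  have h2 := hnn s (1 + m)
  linarith

lemma Qmat_rowsum_le (hnn : ∀ i j, 0 ≤ L i j) (hrow : ∀ i, HasSum (fun j => L i j) 1)
    (m : ℕ) (i : Fin m) : ∑ j, Qmat L m i j ≤ 1 := by
  have hconv : ∑ j, Qmat L m i j = ∑ j ∈ Finset.range m, L (1 + (i : ℕ)) (1 + j) :=
    Fin.sum_univ_eq_sum_range (fun j => L (1 + (i : ℕ)) (1 + j)) m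
  rw [hconv]
  exact sum_shift_le L hnn hrow _ m

lemma exists_deficient (hnn : ∀ i j, 0 ≤ L i j) (hrow : ∀ i, HasSum (fun j => L i j) 1)
    (hirr : ∀ i j : ℕ, ∃ (n : ℕ) (x : ℕ → ℕ), 0 < n ∧ x 0 = i ∧ x n = j ∧
      ∀ k, k < n → 0 < L (x k) (x (k + 1)))
    {m : ℕ} (hm : 0 < m) (i : Fin m) :
    ∃ n, 0 < n ∧ rsum (Qmat L m) n i < 1 := by
  classical
  obtain ⟨nn, p, hnn0, hp0, hpnn, hstep⟩ := hirr (1 + (i : ℕ)) 0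
  have hexit : ∃ t, ¬(1 ≤ p (t + 1) ∧ p (t + 1) ≤ m) := by
    refine ⟨nn - 1, ?_⟩
    rw [show nn - 1 + 1 = nn by omega, hpnn]
    omega
  set t₀ := Nat.find hexit with ht₀def
  have ht₀ : ¬(1 ≤ p (t₀ + 1) ∧ p (t₀ + 1) ≤ m) := Nat.find_spec hexit
  have hmin : ∀ t, t < t₀ → 1 ≤ p (t + 1) ∧ p (t + 1) ≤ m := by
    intro t ht
    have := Nat.find_min hexit ht
    tauto
  have ht₀nn : t₀ < nn := by
    have := Nat.find_min' hexit (show ¬(1 ≤ p ((nn - 1) + 1) ∧ p ((nn - 1) + 1) ≤ m) by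
      rw [show nn - 1 + 1 = nn by omega, hpnn]; omega)
    omega
  have hin : ∀ t, t ≤ t₀ → 1 ≤ p t ∧ p t ≤ m := by
    intro t ht
    cases t with
    | zero => rw [hp0]; have := i.isLt; omega
    | succ t => exact hmin t (by omega)
  have claim : ∀ jj, jj ≤ t₀ → ∀ t, t = t₀ - jj → ∀ (hb2 : p t - 1 < m),
      rsum (Qmat L m) (jj + 1) ⟨p t - 1, hb2⟩ < 1 := by
    intro jj
    induction jj with
    | zero =>
      intro _ t ht hb2
      have ht' : t = t₀ := by omega
      subst ht'
      have hins := hin t₀ le_rfl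
      rw [rsum_succ]
      have hc : ∑ k, Qmat L m (⟨p t₀ - 1, hb2⟩ : Fin m) k * rsum (Qmat L m) 0 k
          = ∑ j ∈ Finset.range m, L (p t₀) (1 + j) := by
        rw [Finset.sum_congr rfl (fun k _ => by rw [rsum_zero, mul_one])]
        have h0 := Fin.sum_univ_eq_sum_range (fun j => L (1 + (p t₀ - 1)) (1 + j)) m
        calc Finset.univ.sum (Qmat L m ⟨p t₀ - 1, hb2⟩)
            = ∑ i : Fin m, L (1 + (p t₀ - 1)) (1 + (i : ℕ)) := rfl
          _ = ∑ j ∈ Finset.range m, L (1 + (p t₀ - 1)) (1 + j) := h0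
          _ = ∑ j ∈ Finset.range m, L (p t₀) (1 + j) := by
              rw [show (1 + (p t₀ - 1)) = p t₀ by omega]
      rw [hc]
      have hu : ∀ j, j < m → 1 + j ≠ p (t₀ + 1) := by
        intro j hj
        omega
      have hbound := sum_shift_add_le L hnn hrow (p t₀) m (p (t₀ + 1)) hu
      have hpos := hstep t₀ (by omega)
      linarith
    | succ jj IH =>
      intro hle t ht hb2
      have hins' := hin (t₀ - jj) (by omega)
      have hb2' : p (t₀ - jj) - 1 < m := by omega
      have hIH := IH (by omega) (t₀ - jj) rfl hb2'
      set i1 : Fin m := ⟨p t - 1, hb2⟩ with hi1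
      set i2 : Fin m := ⟨p (t₀ - jj) - 1, hb2'⟩ with hi2
      have hins := hin t (by omega)
      have hQpos : 0 < Qmat L m i1 i2 := by
        have harg : (1 + ((i1 : ℕ))) = p t := by simp [hi1]; omega
        have harg2 : (1 + ((i2 : ℕ))) = p (t₀ - jj) := by simp [hi2]; omega
        show 0 < L (1 + (i1 : ℕ)) (1 + (i2 : ℕ))
        rw [harg, harg2]
        have := hstep t (by omega)
        rw [show t + 1 = t₀ - jj by omega] at this
        exact this
      rw [rsum_succ]
      have hsplit : ∑ k, Qmat L m i1 k * rsum (Qmat L m) (jj + 1) k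
          = Qmat L m i1 i2 * rsum (Qmat L m) (jj + 1) i2
            + ∑ k ∈ Finset.univ.erase i2, Qmat L m i1 k * rsum (Qmat L m) (jj + 1) k :=
        (Finset.add_sum_erase _ (fun k => Qmat L m i1 k * rsum (Qmat L m) (jj + 1) k)
          (Finset.mem_univ i2)).symm
      rw [hsplit]
      have hb3 : ∑ k ∈ Finset.univ.erase i2, Qmat L m i1 k * rsum (Qmat L m) (jj + 1) k
          ≤ ∑ k ∈ Finset.univ.erase i2, Qmat L m i1 k := by
        apply Finset.sum_le_sum
        intro k _
        have h1 := rsum_le_one (Qmat L m) (fun a b => hnn _ _)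
          (Qmat_rowsum_le L hnn hrow m) (jj + 1) k
        have h2 : 0 ≤ Qmat L m i1 k := hnn _ _
        nlinarith [rsum_le_one (Qmat L m) (fun a b => hnn _ _) (Qmat_rowsum_le L hnn hrow m) (jj+1) k]
      have hb4 : Qmat L m i1 i2 + ∑ k ∈ Finset.univ.erase i2, Qmat L m i1 k ≤ 1 := by
        have he := Finset.add_sum_erase Finset.univ (fun k => Qmat L m i1 k) (Finset.mem_univ i2)
        have hr := Qmat_rowsum_le L hnn hrow m i1
        linarith
      have hb5 : Qmat L m i1 i2 * rsum (Qmat L m) (jj + 1) i2 < Qmat L m i1 i2 :=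
        by nlinarith
      linarith
  have hfin : p 0 - 1 < m := by
    rw [hp0]
    have := i.isLt
    omega
  have := claim t₀ le_rfl 0 (by omega) hfin
  have hidx : (⟨p 0 - 1, hfin⟩ : Fin m) = i := by
    apply Fin.ext
    simp only [hp0]
    omega
  rw [hidx] at this
  exact ⟨t₀ + 1, by omega, this⟩

end HitAux

open HitAux HitAux2

set_option maxHeartbeats 1600000 in
theorem hitting_b_before_zero_almost_lower_triangular (L : ℕ → ℕ → ℝ)
    (hnn : ∀ i j, 0 ≤ L i j)
    (hrow : ∀ i, HasSum (fun j => L i j) 1)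
    (hlt : ∀ i j, i + 1 < j → L i j = 0)
    (hirr : MatIrreducible L)
    (x b : ℕ) (hx : 0 < x) (hxb : x < b)
    (μ : MeasureTheory.Measure (ℕ → ℕ)) (hμ : IsMarkovLaw L x μ) :
    μ {ω | ∃ n, 1 ≤ n ∧ ω n = b ∧ ∀ m, 1 ≤ m → m < n → 1 ≤ ω m ∧ ω m ≤ b - 1} =
      ENNReal.ofReal
        ((detOneSubI L 1 (x - 1) / detOneSubI L 1 (b - 1)) *
          ∏ j ∈ Finset.Icc x (b - 1), L j (j + 1)) := by
  classical
  obtain ⟨hprob, hcyl⟩ := hμ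
  set m : ℕ := b - 1 with hmdef
  have hb : b = m + 1 := by omega
  have hm : 0 < m := by omega
  have hxm : x ≤ m := by omega
  set Q : Matrix (Fin m) (Fin m) ℝ := HitAux.Qmat L m with hQdef
  have hQnn : ∀ i j, 0 ≤ Q i j := fun i j => hnn _ _
  have hQrow : ∀ i, ∑ j, Q i j ≤ 1 := HitAux.Qmat_rowsum_le L hnn hrow m
  set i₀ : Fin m := ⟨x - 1, by omega⟩ with hi₀
  set lix : Fin m := ⟨m - 1, by omega⟩ with hlix
  -- summability of matrix powers
  have hsum : ∀ i j : Fin m, Summable (fun n => (Q ^ n) i j) := by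
    have hdef := fun i => HitAux.exists_deficient L hnn hrow hirr hm i
    choose nf hnf1 hnf2 using hdef
    haveI : Nonempty (Fin m) := ⟨i₀⟩
    set N : ℕ := Finset.univ.sup nf + 1 with hN
    have hNpos : 0 < N := by omega
    have hle : ∀ i, rsum Q N i ≤ rsum Q (nf i) i := by
      intro i
      apply HitAux2.rsum_anti Q hQnn hQrow (nf i) N
      have := Finset.le_sup (f := nf) (Finset.mem_univ i)
      omega
    set c : ℝ := Finset.univ.sup' Finset.univ_nonempty (fun i => HitAux2.rsum Q N i) with hc
    have hcle : ∀ i, rsum Q N i ≤ c := fun i => Finset.le_sup' _ (Finset.mem_univ i)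
    have hc1 : c < 1 := by
      rw [hc, Finset.sup'_lt_iff]
      intro i _
      exact lt_of_le_of_lt (hle i) (hnf2 i)
    have hc0 : 0 ≤ c := le_trans (HitAux2.rsum_nonneg Q hQnn N i₀) (hcle i₀)
    exact fun i j => HitAux2.summable_pow_entry Q hQnn hQrow hNpos hc0 hc1 hcle i j
  -- the events
  set A : ℕ → Set (ℕ → ℕ) :=
    fun nn => {ω | ω nn = b ∧ ∀ m', 1 ≤ m' → m' < nn → 1 ≤ ω m' ∧ ω m' ≤ m} with hA
  have hEv : {ω : ℕ → ℕ | ∃ n, 1 ≤ n ∧ ω n = b ∧ ∀ m', 1 ≤ m' → m' < n → 1 ≤ ω m' ∧ ω m' ≤ m}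
      = ⋃ n : ℕ, A (n + 1) := by
    ext ω
    simp only [Set.mem_setOf_eq, Set.mem_iUnion, hA]
    constructor
    · rintro ⟨n, hn1, h2, h3⟩
      refine ⟨n - 1, ?_, ?_⟩
      · rw [show n - 1 + 1 = n by omega]; exact h2
      · rw [show n - 1 + 1 = n by omega]; exact h3
    · rintro ⟨n, h2, h3⟩
      exact ⟨n + 1, by omega, h2, h3⟩
  have hmA : ∀ nn, MeasurableSet (A nn) := by
    intro nn
    have : A nn = ((fun ω : ℕ → ℕ => ω nn) ⁻¹' {b}) ∩
        ⋂ (m' : ℕ) (_ : 1 ≤ m') (_ : m' < nn),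
          ((fun ω : ℕ → ℕ => ω m') ⁻¹' {y | 1 ≤ y ∧ y ≤ m}) := by
      ext ω
      simp [hA]
    rw [this]
    exact MeasurableSet.inter
      (measurable_pi_apply nn (Set.to_countable _).measurableSet)
      (MeasurableSet.iInter fun m' => MeasurableSet.iInter fun _ =>
        MeasurableSet.iInter fun _ =>
          measurable_pi_apply m' (Set.to_countable _).measurableSet)
  have hdisj : Pairwise (Function.onFun Disjoint fun n => A (n + 1)) := by
    have key : ∀ a c : ℕ, a < c → Disjoint (A (a + 1)) (A (c + 1)) := by
      intro a c hac
      rw [Set.disjoint_left]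
      intro ω ha hc
      simp only [hA, Set.mem_setOf_eq] at ha hc
      have h1 : ω (a + 1) = b := ha.1
      have h2 := hc.2 (a + 1) (by omega) (by omega)
      omega
    intro a c hne
    rcases lt_or_gt_of_ne hne with h | h
    · exact key a c h
    · exact (key c a h).symm
  have hAn : ∀ n : ℕ, μ (A (n + 1)) = ENNReal.ofReal ((Q ^ n) i₀ lix * L m b) := by
    intro n
    -- extension function
    set extf : (Fin (n + 2) → ℕ) → (ℕ → ℕ) :=
      fun v k => if h : k < n + 2 then v ⟨k, h⟩ else 0 with hextdef
    have hextv : ∀ (v : Fin (n + 2) → ℕ) (k : Fin (n + 2)), extf v (k : ℕ) = v k := by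
      intro v k
      simp only [hextdef]
      rw [dif_pos k.isLt]
    set Cv : (Fin (n + 2) → ℕ) → Set (ℕ → ℕ) :=
      fun v => {ω | ∀ k ≤ n + 1, ω k = extf v k} ∩ A (n + 1) with hCvdef
    have hA2 : A (n + 1) = ⋃ v, Cv v := by
      ext ω
      simp only [Set.mem_iUnion, hCvdef, Set.mem_inter_iff]
      constructor
      · intro hω
        refine ⟨fun k => ω (k : ℕ), ⟨?_, hω⟩⟩
        intro k hk
        simp only [hextdef]
        rw [dif_pos (show k < n + 2 by omega)]
      · rintro ⟨v, _, h⟩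
        exact h
    have hmc : ∀ v, MeasurableSet (Cv v) := by
      intro v
      apply MeasurableSet.inter
      · have : {ω : ℕ → ℕ | ∀ k ≤ n + 1, ω k = extf v k}
            = ⋂ (k : ℕ) (_ : k ≤ n + 1), ((fun ω : ℕ → ℕ => ω k) ⁻¹' {extf v k}) := by
          ext ω; simp
        rw [this]
        exact MeasurableSet.iInter fun k => MeasurableSet.iInter fun _ =>
          measurable_pi_apply k (Set.to_countable _).measurableSet
      · exact hmA (n + 1)
    have hdv : Pairwise (Function.onFun Disjoint Cv) := by
      intro v v' hne
      rw [Function.onFun, Set.disjoint_left]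
      intro ω hω hω'
      apply hne
      funext k
      have h1 := hω.1 (k : ℕ) (by have := k.isLt; omega)
      have h2 := hω'.1 (k : ℕ) (by have := k.isLt; omega)
      rw [hextv] at h1 h2
      rw [← h1, ← h2]
    rw [hA2, measure_iUnion hdv hmc]
    -- value of each piece
    set f : (Fin (n + 2) → ℕ) → ENNReal := fun v =>
        if (extf v (n + 1) = b ∧ ∀ m', 1 ≤ m' → m' < n + 1 → 1 ≤ extf v m' ∧ extf v m' ≤ m)
        then ENNReal.ofReal ((if extf v 0 = x then (1 : ℝ) else 0) *
          ∏ k ∈ Finset.range (n + 1), L (extf v k) (extf v (k + 1)))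
        else 0 with hfdef
    have hCvval : ∀ v, μ (Cv v) = f v := by
      intro v
      by_cases hcv : (extf v (n + 1) = b ∧
          ∀ m', 1 ≤ m' → m' < n + 1 → 1 ≤ extf v m' ∧ extf v m' ≤ m)
      · simp only [hfdef]
        rw [if_pos hcv]
        have hsub2 : {ω : ℕ → ℕ | ∀ k ≤ n + 1, ω k = extf v k} ⊆ A (n + 1) := by
          intro ω hω
          simp only [hA, Set.mem_setOf_eq]
          constructor
          · rw [hω (n + 1) le_rfl]; exact hcv.1
          · intro m' hm1 hm2
            rw [hω m' (by omega)]
            exact hcv.2 m' hm1 hm2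
        have hq : Cv v = {ω : ℕ → ℕ | ∀ k ≤ n + 1, ω k = extf v k} := by
          rw [hCvdef]
          exact Set.inter_eq_left.mpr hsub2
        rw [hq, hcyl (n + 1) (extf v)]
      · simp only [hfdef]
        rw [if_neg hcv]
        have hq : Cv v = ∅ := by
          rw [Set.eq_empty_iff_forall_notMem]
          rintro ω ⟨h1, h2⟩
          simp only [hA, Set.mem_setOf_eq] at h2
          apply hcv
          constructor
          · rw [← h1 (n + 1) le_rfl]; exact h2.1
          · intro m' hm1 hm2
            rw [← h1 m' (by omega)]
            exact h2.2 m' hm1 hm2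
        rw [hq, measure_empty]
    rw [tsum_congr hCvval]
    -- injection from interior paths
    set ι : (Fin (n + 1) → Fin m) → (Fin (n + 2) → ℕ) :=
      fun q k => if h : (k : ℕ) < n + 1 then (1 + (q ⟨k, h⟩ : ℕ)) else b with hιdef
    have hext_ι : ∀ (q) (k : ℕ) (h : k < n + 2), extf (ι q) k = ι q ⟨k, h⟩ := by
      intro q k h
      simp only [hextdef]
      rw [dif_pos h]
    have hev1 : ∀ (q) (k : ℕ) (h : k < n + 1), extf (ι q) k = 1 + (q ⟨k, h⟩ : ℕ) := by
      intro q k h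
      rw [hext_ι q k (by omega)]
      simp only [hιdef]
      rw [dif_pos (show ((⟨k, by omega⟩ : Fin (n + 2)) : ℕ) < n + 1 from h)]
    have hev2 : ∀ q, extf (ι q) (n + 1) = b := by
      intro q
      rw [hext_ι q (n + 1) (by omega)]
      simp only [hιdef]
      rw [dif_neg (by simp)]
    have hev1' : ∀ (q) (k : Fin (n + 1)), extf (ι q) (k : ℕ) = 1 + (q k : ℕ) := by
      intro q k
      rw [hev1 q (k : ℕ) k.isLt]
    have hinj : Function.Injective ι := by
      intro q q' he
      funext k
      have h1 : extf (ι q) (k : ℕ) = extf (ι q') (k : ℕ) := by rw [he]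
      rw [hev1' q k, hev1' q' k] at h1
      exact Fin.ext (by omega)
    have hsupp : Function.support f ⊆ Set.range ι := by
      intro v hv
      simp only [Function.mem_support, hfdef] at hv
      by_cases hcv : (extf v (n + 1) = b ∧
          ∀ m', 1 ≤ m' → m' < n + 1 → 1 ≤ extf v m' ∧ extf v m' ≤ m)
      swap
      · exact absurd (if_neg hcv) hv
      have hx0 : extf v 0 = x := by
        by_contra hx0
        apply hv
        rw [if_pos hcv, if_neg hx0, zero_mul, ENNReal.ofReal_zero]
      have hbound : ∀ k : ℕ, k < n + 1 → 1 ≤ extf v k ∧ extf v k ≤ m := by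
        intro k hk
        rcases Nat.eq_zero_or_pos k with h0 | h0
        · subst h0; rw [hx0]; exact ⟨hx, hxm⟩
        · exact hcv.2 k h0 hk
      refine ⟨fun k => ⟨extf v (k : ℕ) - 1, by
        have h1 := (hbound (k : ℕ) k.isLt).1
        have h2 := (hbound (k : ℕ) k.isLt).2
        omega⟩, ?_⟩
      funext k
      by_cases hk : (k : ℕ) < n + 1
      · simp only [hιdef]
        rw [dif_pos hk]
        have h1 := (hbound (k : ℕ) hk).1
        have h2 := hextv v k
        show (1 + (extf v (k : ℕ) - 1)) = v k
        omega
      · simp only [hιdef]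
        rw [dif_neg hk]
        have h2 := hextv v k
        have h3 : ((k : ℕ)) = n + 1 := by have := k.isLt; omega
        rw [h3] at h2
        rw [← h2, hcv.1]
    rw [← Function.Injective.tsum_eq hinj hsupp]
    -- evaluate on paths
    have hfι : ∀ q : Fin (n + 1) → Fin m,
        f (ι q)
        = ENNReal.ofReal (if q 0 = i₀ then
            (∏ k : Fin n, Q (q k.castSucc) (q k.succ)) * L (1 + (q (Fin.last n) : ℕ)) b
          else 0) := by
      intro q
      simp only [hfdef]
      have hcnd : (extf (ι q) (n + 1) = b ∧
          ∀ m', 1 ≤ m' → m' < n + 1 → 1 ≤ extf (ι q) m' ∧ extf (ι q) m' ≤ m) := by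
        refine ⟨hev2 q, ?_⟩
        intro m' hm1 hm2
        rw [hev1 q m' hm2]
        have := (q ⟨m', hm2⟩).isLt
        omega
      rw [if_pos hcnd]
      have hind : (extf (ι q) 0 = x) ↔ (q 0 = i₀) := by
        have h0 : extf (ι q) ((0 : Fin (n + 1)) : ℕ) = 1 + (q 0 : ℕ) := hev1' q 0
        simp only [Fin.val_zero] at h0
        rw [h0]
        constructor
        · intro h
          apply Fin.ext
          simp only [hi₀]
          omega
        · intro h
          rw [h]
          simp only [hi₀]
          omega
      have hprod : ∏ k ∈ Finset.range (n + 1), L (extf (ι q) k) (extf (ι q) (k + 1))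
          = (∏ k : Fin n, Q (q k.castSucc) (q k.succ)) * L (1 + (q (Fin.last n) : ℕ)) b := by
        rw [Finset.prod_range_succ]
        congr 1
        · rw [← Fin.prod_univ_eq_prod_range (fun k => L (extf (ι q) k) (extf (ι q) (k + 1))) n]
          apply Finset.prod_congr rfl
          intro k _
          have e1 : extf (ι q) (k : ℕ) = 1 + (q k.castSucc : ℕ) := by
            rw [show ((k : ℕ)) = ((k.castSucc : Fin (n + 1)) : ℕ) from rfl, hev1' q k.castSucc]
          have e2 : extf (ι q) ((k : ℕ) + 1) = 1 + (q k.succ : ℕ) := by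
            rw [show ((k : ℕ) + 1) = ((k.succ : Fin (n + 1)) : ℕ) from rfl, hev1' q k.succ]
          rw [e1, e2]
          rfl
        · have e1 : extf (ι q) n = 1 + (q (Fin.last n) : ℕ) := hev1' q (Fin.last n)
          rw [e1, hev2 q]
      rw [hprod]
      by_cases h0 : q 0 = i₀
      · rw [if_pos (hind.mpr h0), if_pos h0, one_mul]
      · rw [if_neg (fun h => h0 (hind.mp h)), if_neg h0, zero_mul]
    rw [tsum_congr hfι, tsum_fintype]
    rw [← ENNReal.ofReal_sum_of_nonneg (by
      intro q _
      by_cases h0 : q 0 = i₀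
      · rw [if_pos h0]
        exact mul_nonneg (Finset.prod_nonneg fun k _ => hQnn _ _) (hnn _ _)
      · rw [if_neg h0])]
    congr 1
    -- finite path sum equals matrix power entry
    have hWt : ∀ q : Fin (n + 1) → Fin m,
        (if q 0 = i₀ then
          (∏ k : Fin n, Q (q k.castSucc) (q k.succ)) * L (1 + (q (Fin.last n) : ℕ)) b
        else 0)
        = ∑ t : Fin m, (if q 0 = i₀ ∧ q (Fin.last n) = t then
            (∏ k : Fin n, Q (q k.castSucc) (q k.succ)) * L (1 + (t : ℕ)) b else 0) := by
      intro q
      rcases eq_or_ne (q 0) i₀ with h0 | h0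
      · rw [if_pos h0, Finset.sum_eq_single (q (Fin.last n))]
        · rw [if_pos ⟨h0, rfl⟩]
        · intro t _ ht
          rw [if_neg (fun hc => ht hc.2.symm)]
        · intro h; exact absurd (Finset.mem_univ _) h
      · rw [if_neg h0, Finset.sum_eq_zero]
        intro t _
        rw [if_neg (fun hc => h0 hc.1)]
    rw [Finset.sum_congr rfl (fun q _ => hWt q), Finset.sum_comm]
    have hT : ∀ t : Fin m,
        ∑ q : Fin (n + 1) → Fin m, (if q 0 = i₀ ∧ q (Fin.last n) = t then
            (∏ k : Fin n, Q (q k.castSucc) (q k.succ)) * L (1 + (t : ℕ)) b else 0)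
          = (Q ^ n) i₀ t * L (1 + (t : ℕ)) b := by
      intro t
      rw [← HitAux2.pathSum Q n i₀ t, Finset.sum_mul]
      apply Finset.sum_congr rfl
      intro q _
      rw [ite_mul, zero_mul]
    rw [Finset.sum_congr rfl (fun t _ => hT t)]
    rw [Finset.sum_eq_single lix]
    · rw [show 1 + ((lix : Fin m) : ℕ) = m by simp only [hlix]; omega]
    · intro t _ ht
      have htv : (t : ℕ) < m - 1 := by
        have h1 := t.isLt
        have h2 : (t : ℕ) ≠ m - 1 := fun h => ht (Fin.ext (by simp only [hlix]; omega))
        omega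
      rw [hlt (1 + (t : ℕ)) b (by omega), mul_zero]
    · intro h; exact absurd (Finset.mem_univ _) h
  -- assemble the series
  rw [hEv, measure_iUnion hdisj (fun n => hmA (n + 1)), tsum_congr hAn]
  have hnonneg : ∀ n, 0 ≤ (Q ^ n) i₀ lix * L m b :=
    fun n => mul_nonneg (HitAux2.pow_entry_nonneg Q hQnn n i₀ lix) (hnn m b)
  have hsummable : Summable (fun n => (Q ^ n) i₀ lix * L m b) := (hsum i₀ lix).mul_right _
  rw [← ENNReal.ofReal_tsum_of_nonneg hnonneg hsummable]
  congr 1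
  rw [tsum_mul_right]
  -- linear algebra: identify the tsum with the determinant expression
  set vv : Fin m → ℝ :=
    fun i => DmL L (i : ℕ) * ∏ j ∈ Finset.Ico ((i : ℕ)) (m - 1), L (1 + j) (2 + j) with hvv
  have hrowv : ∀ j : Fin m, ∑ k, Q j k * vv k = vv j - (if j = lix then DmL L m else 0) := by
    intro j
    have hk := HitAux.rowKey L hlt hm (j : ℕ) j.isLt
    have hconv : ∑ k, Q j k * vv k = ∑ k ∈ Finset.range m, L (1 + (j : ℕ)) (1 + k) *
        (DmL L k * ∏ jj ∈ Finset.Ico k (m - 1), L (1 + jj) (2 + jj)) := by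
      rw [← Fin.sum_univ_eq_sum_range (fun k => L (1 + (j : ℕ)) (1 + k) *
        (DmL L k * ∏ jj ∈ Finset.Ico k (m - 1), L (1 + jj) (2 + jj))) m]
      apply Finset.sum_congr rfl
      intro k _
      rfl
    rw [hconv, hk]
    congr 1
    by_cases hj : j = lix
    · rw [if_pos hj, if_pos (by rw [hj])]
    · rw [if_neg hj, if_neg (fun h => hj (Fin.ext (by simp only [hlix]; omega)))]
  have hvec : (1 - Q) *ᵥ vv = Pi.single lix (DmL L m) := by
    funext j
    rw [Matrix.sub_mulVec, Matrix.one_mulVec, Pi.sub_apply]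
    have : (Q *ᵥ vv) j = ∑ k, Q j k * vv k := by
      simp [Matrix.mulVec, dotProduct]
    rw [this, hrowv j, Pi.single_apply]
    ring
  have hSleft : Smat Q * (1 - Q) = 1 :=
    (mul_eq_one_comm).mp (HitAux2.one_sub_mul_Smat Q hsum)
  have hvveq : vv = fun i => Smat Q i lix * DmL L m := by
    calc vv = (1 : Matrix (Fin m) (Fin m) ℝ) *ᵥ vv := (Matrix.one_mulVec vv).symm
      _ = (Smat Q * (1 - Q)) *ᵥ vv := by rw [hSleft]
      _ = Smat Q *ᵥ ((1 - Q) *ᵥ vv) := (Matrix.mulVec_mulVec vv (Smat Q) (1 - Q)).symm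
      _ = Smat Q *ᵥ Pi.single lix (DmL L m) := by rw [hvec]
      _ = fun i => Smat Q i lix * DmL L m := Matrix.mulVec_single _ _ _
  have hdet : DmL L m ≠ 0 := by
    have h1 : HitAux.hitMat L m = 1 - Q := rfl
    have h2 := Matrix.det_ne_zero_of_right_inverse (HitAux2.one_sub_mul_Smat Q hsum)
    rw [DmL, h1]
    exact h2
  have hSval : (∑' n, (Q ^ n) i₀ lix) = vv i₀ / DmL L m := by
    have h1 : vv i₀ = Smat Q i₀ lix * DmL L m := by rw [hvveq]
    have h2 : (∑' n, (Q ^ n) i₀ lix) = Smat Q i₀ lix := rfl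
    rw [h2]
    field_simp [h1]
    exact h1.symm
  rw [hSval]
  -- final determinant/product bookkeeping
  have hdet1 : detOneSubI L 1 (x - 1) = DmL L (x - 1) := rfl
  have hdet2 : detOneSubI L 1 m = DmL L m := rfl
  have hvv0 : vv i₀ = DmL L (x - 1) * ∏ j ∈ Finset.Ico (x - 1) (m - 1), L (1 + j) (2 + j) := by
    simp only [hvv, hi₀]
  have hconvP : ∏ j ∈ Finset.Ico (x - 1) (m - 1), L (1 + j) (2 + j)
      = ∏ j ∈ Finset.Icc x (m - 1), L j (j + 1) := by
    have h2 : Finset.Icc x (m - 1) = Finset.Ico x m := by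
      rw [← Finset.Ico_add_one_right_eq_Icc]
      congr 1
      omega
    rw [h2, Finset.prod_Ico_eq_prod_range, Finset.prod_Ico_eq_prod_range]
    rw [show m - 1 - (x - 1) = m - x by omega]
    apply Finset.prod_congr rfl
    intro i _
    rw [show 1 + (x - 1 + i) = x + i by omega, show 2 + (x - 1 + i) = x + i + 1 by omega]
  have hps' : ∀ M : ℕ, 0 < M → x ≤ M → ∏ j ∈ Finset.Icc x M, L j (j + 1)
      = (∏ j ∈ Finset.Icc x (M - 1), L j (j + 1)) * L M (M + 1) := by
    intro M hM hxM
    obtain ⟨m', rfl⟩ : ∃ m', M = m' + 1 := ⟨M - 1, by omega⟩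
    rw [Finset.prod_Icc_succ_top (by omega)]
    rw [show m' + 1 - 1 = m' by omega]
  have hps := hps' m hm hxm
  rw [hdet1, hdet2, hvv0, hconvP, hps]
  rw [hb]
  ring
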